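/- Let n ≥ 1, N > n, and A > 0. Let Φ : ℝ^n × ℝ^n → ℂ be measurable with |Φ(x,y)| ≤ A (1+|x−y|)^{−N} for all x, y, and such that |Φ(x,y) − Φ(x′,y)| ≤ A |x−x′| (1+|x−y|)^{−N} whenever |x−x′| ≤ 1. For j ∈ ℤ define T_j f(x) = ∫_{ℝ^n} 2^{jn} Φ(2^j x, 2^j y) f(y) dy. Then there exists a constant C depending only on n and N such that for every locally integrable f : ℝ^n → ℂ, every pair of integers j, k with j ≤ k − 10, and every x ∈ ℝ^n with M f(x) < ∞, |E_{k+1}(T_j f)(x) − E_k (T_j f)(x)| ≤ C · A · 2^{j−k} · M f(x). -/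

import Mathlib

open MeasureTheory ENNReal

/-- The dyadic cube of generation `k ∈ ℤ` containing `x`: the product
`∏ᵢ [2^{−k} mᵢ, 2^{−k}(mᵢ+1))` with `mᵢ = ⌊2^k xᵢ⌋`. -/
def dyadicCubeZ (n : ℕ) (k : ℤ) (x : EuclideanSpace ℝ (Fin n)) :
    Set (EuclideanSpace ℝ (Fin n)) :=
  {y | ∀ i, ⌊(2 : ℝ) ^ k * x i⌋ = ⌊(2 : ℝ) ^ k * y i⌋}

/-- The dyadic expectation operator `E_k g (x) = 2^{kn} ∫_{Q_k(x)} g` (complex-valued). -/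
noncomputable def dyadicEC (n : ℕ) (k : ℤ) (g : EuclideanSpace ℝ (Fin n) → ℂ)
    (x : EuclideanSpace ℝ (Fin n)) : ℂ :=
  ((2 : ℝ) ^ (k * (n : ℤ)) : ℝ) • ∫ y in dyadicCubeZ n k x, g y

/-- The (centered) Hardy–Littlewood maximal function. -/
noncomputable def maximalFn (n : ℕ) (g : EuclideanSpace ℝ (Fin n) → ℝ)
    (x : EuclideanSpace ℝ (Fin n)) : ℝ≥0∞ :=
  ⨆ (R : ℝ) (_ : 0 < R),
    (volume (Metric.ball x R))⁻¹ * ∫⁻ y in Metric.ball x R, ENNReal.ofReal |g y|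

lemma ofReal_norm_eq_coe_nnnorm {E : Type*} [SeminormedAddGroup E] (x : E) :
    ENNReal.ofReal ‖x‖ = (‖x‖₊ : ℝ≥0∞) := ENNReal.ofReal_eq_coe_nnreal _

lemma aux_floor_half (t : ℝ) : ⌊t⌋ = ⌊(⌊2*t⌋ : ℝ)/2⌋ := by
  apply le_antisymm
  · apply Int.le_floor.2
    have h1 : ((2*⌊t⌋ : ℤ) : ℝ) ≤ 2*t := by push_cast; linarith [Int.floor_le t]
    have h2 : (2*⌊t⌋ : ℤ) ≤ ⌊2*t⌋ := Int.le_floor.2 h1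
    have : ((2*⌊t⌋ : ℤ) : ℝ) ≤ (⌊2*t⌋ : ℝ) := by exact_mod_cast h2
    push_cast at this ⊢
    linarith
  · apply Int.floor_le_floor
    nlinarith [Int.floor_le (2*t)]

lemma aux_rpow_anti {a b N : ℝ} (ha : 0 < a) (hab : a ≤ b) (hN : 0 ≤ N) :
    b ^ (-N) ≤ a ^ (-N) :=
  Real.rpow_le_rpow_of_nonpos ha hab (neg_nonpos.2 hN)

lemma aux_kernel_shift {D N : ℝ} (hD : 0 ≤ D) (hN : 0 ≤ N)
    {E : Type*} [NormedAddCommGroup E] (a b y : E) (hab : ‖a - b‖ ≤ D) :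
    (1 + ‖a - y‖) ^ (-N) ≤ (1 + D) ^ N * (1 + ‖b - y‖) ^ (-N) := by
  have h1 : (0:ℝ) < 1 + ‖b - y‖ := by positivity
  have h2 : (0:ℝ) < 1 + D := by positivity
  have h3 : (0:ℝ) < 1 + ‖a - y‖ := by positivity
  have key : (1 + ‖b - y‖) / (1 + D) ≤ 1 + ‖a - y‖ := by
    rw [div_le_iff₀ h2]
    have hby : ‖b - y‖ ≤ ‖b - a‖ + ‖a - y‖ := by
      have := norm_add_le (b - a) (a - y)
      simpa using this
    have hba : ‖b - a‖ ≤ D := by rwa [norm_sub_rev] at hab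
    nlinarith [norm_nonneg (a - y)]
  calc (1 + ‖a - y‖) ^ (-N) ≤ ((1 + ‖b - y‖) / (1 + D)) ^ (-N) :=
        aux_rpow_anti (by positivity) key hN
    _ = (1 + D) ^ N * (1 + ‖b - y‖) ^ (-N) := by
        rw [Real.div_rpow h1.le h2.le, Real.rpow_neg h1.le, Real.rpow_neg h2.le]
        have : ((1 + D) ^ N) ≠ 0 := by positivity
        field_simp

lemma aux_kernel_lip {n : ℕ} (hn : 1 ≤ n) {N A : ℝ} (hN : 0 ≤ N) (hA : 0 ≤ A)
    {E : Type*} [NormedAddCommGroup E] [NormedSpace ℝ E]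
    (Φ : E × E → ℂ)
    (hLip : ∀ x x' y, ‖x - x'‖ ≤ 1 →
      ‖Φ (x, y) - Φ (x', y)‖ ≤ A * ‖x - x'‖ * (1 + ‖x - y‖) ^ (-N))
    (a b y : E) (hab : ‖a - b‖ ≤ n) :
    ‖Φ (a, y) - Φ (b, y)‖ ≤
      A * ‖a - b‖ * ((1 + (n:ℝ)) ^ N * (1 + ‖a - y‖) ^ (-N)) := by
  have hn' : (0:ℝ) < n := by exact_mod_cast hn
  set p : ℕ → E := fun t => a + ((t:ℝ)/n) • (b - a) with hp
  have hp0 : p 0 = a := by simp [hp]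
  have hpn : p n = b := by
    simp only [hp]
    rw [div_self (ne_of_gt hn')]
    simp
  have hstep : ∀ t : ℕ, p (t+1) - p t = ((1:ℝ)/n) • (b - a) := by
    intro t
    simp only [hp]
    rw [add_sub_add_left_eq_sub, ← sub_smul]
    congr 1
    push_cast
    field_simp
    ring
  have hstepnorm : ∀ t : ℕ, ‖p (t+1) - p t‖ = ‖a - b‖ / n := by
    intro t
    rw [hstep t, norm_smul]
    simp [norm_sub_rev a b, abs_of_pos hn', div_eq_mul_inv, mul_comm]
  have hdist : ∀ t : ℕ, t ≤ n → ‖p t - a‖ ≤ n := by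
    intro t ht
    simp only [hp, add_sub_cancel_left, norm_smul]
    have h1 : |(t:ℝ)/n| ≤ 1 := by
      rw [abs_of_nonneg (by positivity)]
      rw [div_le_one hn']
      exact_mod_cast ht
    calc |(t:ℝ)/n| * ‖b - a‖ ≤ 1 * ‖b - a‖ := by
          exact mul_le_mul_of_nonneg_right h1 (norm_nonneg _)
      _ ≤ (n:ℝ) := by rw [one_mul, norm_sub_rev]; exact hab
  have htel : Φ (b, y) - Φ (a, y) = ∑ t ∈ Finset.range n, (Φ (p (t+1), y) - Φ (p t, y)) := by
    rw [Finset.sum_range_sub (fun t => Φ (p t, y)), hp0, hpn]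
  have hterm : ∀ t ∈ Finset.range n,
      ‖Φ (p (t+1), y) - Φ (p t, y)‖ ≤
        A * (‖a - b‖ / n) * ((1 + (n:ℝ)) ^ N * (1 + ‖a - y‖) ^ (-N)) := by
    intro t ht
    have ht' : t + 1 ≤ n := Finset.mem_range.1 ht
    have h1 : ‖p (t+1) - p t‖ ≤ 1 := by
      rw [hstepnorm]
      rw [div_le_one hn']
      exact hab
    calc ‖Φ (p (t+1), y) - Φ (p t, y)‖
        ≤ A * ‖p (t+1) - p t‖ * (1 + ‖p (t+1) - y‖) ^ (-N) :=
          hLip _ _ _ h1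
      _ ≤ A * (‖a - b‖ / n) * ((1 + (n:ℝ)) ^ N * (1 + ‖a - y‖) ^ (-N)) := by
          rw [hstepnorm]
          apply mul_le_mul_of_nonneg_left _ (by positivity)
          exact aux_kernel_shift (by positivity) hN _ a y (hdist (t+1) ht')
  calc ‖Φ (a, y) - Φ (b, y)‖ = ‖Φ (b, y) - Φ (a, y)‖ := norm_sub_rev _ _
    _ ≤ ∑ t ∈ Finset.range n, ‖Φ (p (t+1), y) - Φ (p t, y)‖ := by
        rw [htel]; exact norm_sum_le _ _
    _ ≤ ∑ t ∈ Finset.range n,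
          A * (‖a - b‖ / n) * ((1 + (n:ℝ)) ^ N * (1 + ‖a - y‖) ^ (-N)) :=
        Finset.sum_le_sum hterm
    _ = A * ‖a - b‖ * ((1 + (n:ℝ)) ^ N * (1 + ‖a - y‖) ^ (-N)) := by
        rw [Finset.sum_const, Finset.card_range, nsmul_eq_mul]
        field_simp

lemma aux_ball_bound {n : ℕ} (f : EuclideanSpace ℝ (Fin n) → ℂ)
    (x : EuclideanSpace ℝ (Fin n)) {r : ℝ} (hr : 0 < r) :
    ∫⁻ z in Metric.ball x r, (‖f z‖₊ : ℝ≥0∞) ≤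
      volume (Metric.ball x r) * maximalFn n (fun y => ‖f y‖) x := by
  have h0 : volume (Metric.ball x r) ≠ 0 := by
    simp [Metric.measure_ball_pos volume x hr |>.ne']
  have hT : volume (Metric.ball x r) ≠ ⊤ := measure_ball_lt_top.ne
  have h1 : (volume (Metric.ball x r))⁻¹ * ∫⁻ y in Metric.ball x r, ENNReal.ofReal |‖f y‖| ≤
      maximalFn n (fun y => ‖f y‖) x :=
    le_iSup₂ (f := fun R (_ : 0 < R) =>
      (volume (Metric.ball x R))⁻¹ * ∫⁻ y in Metric.ball x R, ENNReal.ofReal |‖f y‖|) r hr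
  have h2 : ∀ y : EuclideanSpace ℝ (Fin n), ENNReal.ofReal |‖f y‖| = (‖f y‖₊ : ℝ≥0∞) := by
    intro y; rw [abs_norm, ofReal_norm_eq_coe_nnnorm]
  simp only [h2] at h1
  calc ∫⁻ z in Metric.ball x r, (‖f z‖₊ : ℝ≥0∞)
      = volume (Metric.ball x r) *
        ((volume (Metric.ball x r))⁻¹ * ∫⁻ z in Metric.ball x r, (‖f z‖₊ : ℝ≥0∞)) := by
        rw [← mul_assoc, ENNReal.mul_inv_cancel h0 hT, one_mul]
    _ ≤ _ := mul_le_mul_right h1 _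

lemma aux_maximal_bound {n : ℕ} (hn : 1 ≤ n) {N : ℝ} (hN : (n : ℝ) < N)
    (f : EuclideanSpace ℝ (Fin n) → ℂ) (x : EuclideanSpace ℝ (Fin n)) {c : ℝ} (hc : 0 < c) :
    ∫⁻ z, ENNReal.ofReal (c ^ n * (1 + c * ‖x - z‖) ^ (-N)) * (‖f z‖₊ : ℝ≥0∞) ≤
      (ENNReal.ofReal ((2:ℝ) ^ N / (1 - (2:ℝ) ^ ((n:ℝ) - N))) *
        volume (Metric.ball (0 : EuclideanSpace ℝ (Fin n)) 1)) *
        maximalFn n (fun y => ‖f y‖) x := by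
  have hN0 : 0 ≤ N := le_trans (Nat.cast_nonneg n) hN.le
  haveI : Nonempty (Fin n) := ⟨⟨0, hn⟩⟩
  haveI : Nontrivial (EuclideanSpace ℝ (Fin n)) := by
    infer_instance
  set V := volume (Metric.ball (0 : EuclideanSpace ℝ (Fin n)) 1) with hV
  set M := maximalFn n (fun y => ‖f y‖) x with hM
  set r : ℝ := (2:ℝ) ^ ((n:ℝ) - N) with hr
  have hr0 : 0 ≤ r := Real.rpow_nonneg (by norm_num) _
  have hr1 : r < 1 := Real.rpow_lt_one_of_one_lt_of_neg (by norm_num) (by linarith)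
  set F : EuclideanSpace ℝ (Fin n) → ℝ≥0∞ := fun z =>
    ENNReal.ofReal (c ^ n * (1 + c * ‖x - z‖) ^ (-N)) * (‖f z‖₊ : ℝ≥0∞) with hF
  set S : ℕ → Set (EuclideanSpace ℝ (Fin n)) := fun i => Nat.rec (Metric.ball x (1/c))
    (fun m _ => Metric.ball x ((2:ℝ)^(m+1)/c) \ Metric.ball x ((2:ℝ)^m/c)) i with hSdef
  have hS0 : S 0 = Metric.ball x (1/c) := rfl
  have hSsucc : ∀ m : ℕ, S (m+1) = Metric.ball x ((2:ℝ)^(m+1)/c) \ Metric.ball x ((2:ℝ)^m/c) :=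
    fun m => rfl
  have hSsub : ∀ i : ℕ, S i ⊆ Metric.ball x ((2:ℝ)^i/c) := by
    intro i
    cases i with
    | zero => simp [hS0]
    | succ m => rw [hSsucc]; exact Set.diff_subset
  have hSmeas : ∀ i : ℕ, MeasurableSet (S i) := by
    intro i
    cases i with
    | zero => exact measurableSet_ball
    | succ m => rw [hSsucc]; exact measurableSet_ball.diff measurableSet_ball
  have hcover : (Set.univ : Set (EuclideanSpace ℝ (Fin n))) ⊆ ⋃ i, S i := by
    intro z _
    have hex : ∃ i : ℕ, z ∈ Metric.ball x ((2:ℝ)^i/c) := by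
      obtain ⟨i, hi⟩ := pow_unbounded_of_one_lt (c * dist x z + 1) (by norm_num : (1:ℝ) < 2)
      refine ⟨i, ?_⟩
      rw [Metric.mem_ball, dist_comm, lt_div_iff₀ hc]
      nlinarith
    obtain ⟨i, hi⟩ := hex
    induction i with
    | zero => exact Set.mem_iUnion.2 ⟨0, by simpa [hS0] using hi⟩
    | succ m ih =>
      by_cases hm : z ∈ Metric.ball x ((2:ℝ)^m/c)
      · exact ih hm
      · exact Set.mem_iUnion.2 ⟨m+1, by rw [hSsucc]; exact ⟨hi, hm⟩⟩
  -- pointwise kernel bound on S i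
  have hker : ∀ (i : ℕ) (z : EuclideanSpace ℝ (Fin n)), z ∈ S i →
      (1 + c * ‖x - z‖) ^ (-N) ≤ (2:ℝ) ^ N * ((2:ℝ) ^ (i:ℝ)) ^ (-N) := by
    intro i z hz
    have hhalf : (2:ℝ) ^ (i:ℝ) / 2 ≤ 1 + c * ‖x - z‖ := by
      cases i with
      | zero =>
        simp only [Nat.cast_zero, Real.rpow_zero]
        nlinarith [norm_nonneg (x - z), hc.le, mul_nonneg hc.le (norm_nonneg (x - z))]
      | succ m =>
        rw [hSsucc] at hz
        have hz2 := hz.2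
        rw [Metric.mem_ball, not_lt, dist_comm] at hz2
        have hd : dist x z = ‖x - z‖ := by rw [dist_eq_norm]
        have h1 : (2:ℝ)^m / c ≤ ‖x - z‖ := by rwa [hd] at hz2
        have h2 : (2:ℝ)^m ≤ c * ‖x - z‖ := by
          rw [div_le_iff₀ hc] at h1; linarith [h1]
        have h3 : (2:ℝ) ^ ((m+1 : ℕ):ℝ) = 2 * (2:ℝ)^m := by
          rw [show ((m+1:ℕ):ℝ) = (m:ℝ) + 1 by push_cast; ring,
            Real.rpow_add (by norm_num), Real.rpow_one, Real.rpow_natCast]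
          ring
        rw [h3]
        nlinarith
    have hpos : (0:ℝ) < (2:ℝ) ^ (i:ℝ) / 2 := by positivity
    calc (1 + c * ‖x - z‖) ^ (-N) ≤ ((2:ℝ) ^ (i:ℝ) / 2) ^ (-N) :=
          Real.rpow_le_rpow_of_nonpos hpos hhalf (neg_nonpos.2 hN0)
      _ = (2:ℝ) ^ N * ((2:ℝ) ^ (i:ℝ)) ^ (-N) := by
          rw [Real.div_rpow (by positivity) (by norm_num),
            Real.rpow_neg (by norm_num : (0:ℝ) ≤ 2)]
          field_simp
  -- per-annulus bound
  have hSi : ∀ i : ℕ, (∫⁻ z in S i, F z) ≤ ENNReal.ofReal ((2:ℝ)^N * r^i) * (V * M) := by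
    intro i
    have hri : (0:ℝ) < (2:ℝ)^i / c := by positivity
    set κ : ℝ := c ^ n * ((2:ℝ) ^ N * ((2:ℝ) ^ (i:ℝ)) ^ (-N)) with hκ
    have step1 : (∫⁻ z in S i, F z) ≤ ∫⁻ z in S i, ENNReal.ofReal κ * (‖f z‖₊ : ℝ≥0∞) := by
      apply lintegral_mono_ae
      filter_upwards [ae_restrict_mem (hSmeas i)] with z hz
      apply mul_le_mul_left
      apply ENNReal.ofReal_le_ofReal
      rw [hκ]
      exact mul_le_mul_of_nonneg_left (hker i z hz) (by positivity)
    have step2 : (∫⁻ z in S i, ENNReal.ofReal κ * (‖f z‖₊ : ℝ≥0∞)) =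
        ENNReal.ofReal κ * ∫⁻ z in S i, (‖f z‖₊ : ℝ≥0∞) :=
      lintegral_const_mul' _ _ ofReal_ne_top
    have step3 : (∫⁻ z in S i, (‖f z‖₊ : ℝ≥0∞)) ≤
        volume (Metric.ball x ((2:ℝ)^i/c)) * M :=
      le_trans (lintegral_mono_set (hSsub i)) (aux_ball_bound f x hri)
    have hvol : volume (Metric.ball x ((2:ℝ)^i/c)) =
        ENNReal.ofReal (((2:ℝ)^i/c) ^ n) * V := by
      rw [hV, Measure.addHaar_ball (volume : Measure (EuclideanSpace ℝ (Fin n))) x hri.le,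
        finrank_euclideanSpace_fin]
    have h3 : ((2:ℝ)^(i:ℝ))^(-N) * (2:ℝ)^(i*n : ℕ) = r ^ i := by
      rw [hr, ← Real.rpow_natCast ((2:ℝ)^((n:ℝ)-N)) i, ← Real.rpow_natCast (2:ℝ) (i*n),
        ← Real.rpow_mul (by norm_num : (0:ℝ) ≤ 2), ← Real.rpow_mul (by norm_num : (0:ℝ) ≤ 2),
        ← Real.rpow_add (by norm_num : (0:ℝ) < 2)]
      congr 1
      push_cast
      ring
    have halg : κ * ((2:ℝ)^i/c) ^ n = (2:ℝ)^N * r^i := by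
      have hcn : (c:ℝ) ^ n ≠ 0 := by positivity
      have h1 : ((2:ℝ)^i/c)^n = (2:ℝ)^(i*n : ℕ) / c^n := by rw [div_pow, ← pow_mul]
      rw [hκ, h1, ← h3]
      field_simp
    calc (∫⁻ z in S i, F z) ≤ ENNReal.ofReal κ * ∫⁻ z in S i, (‖f z‖₊ : ℝ≥0∞) := by
          rw [← step2]; exact step1
      _ ≤ ENNReal.ofReal κ * (volume (Metric.ball x ((2:ℝ)^i/c)) * M) :=
          mul_le_mul_right step3 _
      _ = ENNReal.ofReal (κ * ((2:ℝ)^i/c) ^ n) * (V * M) := by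
          rw [hvol, ENNReal.ofReal_mul (by positivity : (0:ℝ) ≤ κ)]
          ring
      _ = ENNReal.ofReal ((2:ℝ)^N * r^i) * (V * M) := by rw [halg]
  -- sum up
  have hsum : ∑' i : ℕ, ENNReal.ofReal ((2:ℝ)^N * r^i) =
      ENNReal.ofReal ((2:ℝ)^N / (1 - r)) := by
    rw [← ENNReal.ofReal_tsum_of_nonneg (fun i => by positivity)
      ((summable_geometric_of_lt_one hr0 hr1).mul_left _)]
    congr 1
    rw [tsum_mul_left, tsum_geometric_of_lt_one hr0 hr1, div_eq_mul_inv]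
  calc (∫⁻ z, F z) = ∫⁻ z in Set.univ, F z := (setLIntegral_univ F).symm
    _ ≤ ∫⁻ z in ⋃ i, S i, F z := lintegral_mono_set hcover
    _ ≤ ∑' i : ℕ, ∫⁻ z in S i, F z := lintegral_iUnion_le S F
    _ ≤ ∑' i : ℕ, ENNReal.ofReal ((2:ℝ)^N * r^i) * (V * M) := ENNReal.tsum_le_tsum hSi
    _ = (∑' i : ℕ, ENNReal.ofReal ((2:ℝ)^N * r^i)) * (V * M) := ENNReal.tsum_mul_right
    _ = ENNReal.ofReal ((2:ℝ)^N / (1 - r)) * (V * M) := by rw [hsum]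
    _ = (ENNReal.ofReal ((2:ℝ)^N / (1 - r)) * V) * M := by ring

variable {n : ℕ} {k : ℤ} {x : EuclideanSpace ℝ (Fin n)}

lemma dyadic_mem_self : x ∈ dyadicCubeZ n k x := fun _ => rfl

lemma dyadic_eq_preimage : dyadicCubeZ n k x =
    (MeasurableEquiv.toLp 2 (Fin n → ℝ)).symm ⁻¹'
      (Set.univ.pi fun i => Set.Ico ((⌊(2:ℝ)^k * x i⌋ : ℝ) * (2:ℝ)^(-k))
        (((⌊(2:ℝ)^k * x i⌋ : ℝ) + 1) * (2:ℝ)^(-k))) := by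
  have h2k : (0:ℝ) < (2:ℝ)^k := by positivity
  ext y
  simp only [dyadicCubeZ, Set.mem_setOf_eq, Set.mem_preimage, Set.mem_pi, Set.mem_univ,
    Set.mem_Ico, forall_true_left]
  have hy : ∀ i, (MeasurableEquiv.toLp 2 (Fin n → ℝ)).symm y i = y i := fun i => rfl
  apply forall_congr'
  intro i
  rw [hy]
  rw [eq_comm, Int.floor_eq_iff]
  have hb : (0:ℝ) < (2:ℝ)^(-k) := by positivity
  have hinv : (2:ℝ)^k * (2:ℝ)^(-k) = 1 := by
    rw [← zpow_add₀ (by norm_num : (2:ℝ) ≠ 0)]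
    simp
  have e : ∀ t:ℝ, ((2:ℝ)^k * t) * (2:ℝ)^(-k) = t := by
    intro t
    rw [mul_comm ((2:ℝ)^k) t, mul_assoc, hinv, mul_one]
  have e2 : ∀ t:ℝ, (t * (2:ℝ)^(-k)) * (2:ℝ)^k = t := by
    intro t
    rw [mul_assoc, mul_comm ((2:ℝ)^(-k)), hinv, mul_one]
  constructor
  · rintro ⟨h1, h2⟩
    refine ⟨?_, ?_⟩
    · calc (⌊(2:ℝ)^k * x i⌋:ℝ) * (2:ℝ)^(-k) ≤ ((2:ℝ)^k * y i) * (2:ℝ)^(-k) :=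
          mul_le_mul_of_nonneg_right h1 hb.le
        _ = y i := e _
    · calc y i = ((2:ℝ)^k * y i) * (2:ℝ)^(-k) := (e _).symm
        _ < ((⌊(2:ℝ)^k * x i⌋:ℝ) + 1) * (2:ℝ)^(-k) := mul_lt_mul_of_pos_right h2 hb
  · rintro ⟨h1, h2⟩
    refine ⟨?_, ?_⟩
    · calc (⌊(2:ℝ)^k * x i⌋:ℝ) = ((⌊(2:ℝ)^k * x i⌋:ℝ) * (2:ℝ)^(-k)) * (2:ℝ)^k := (e2 _).symm
        _ ≤ y i * (2:ℝ)^k := mul_le_mul_of_nonneg_right h1 h2k.le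
        _ = (2:ℝ)^k * y i := mul_comm _ _
    · calc (2:ℝ)^k * y i = (y i) * (2:ℝ)^k := mul_comm _ _
        _ < (((⌊(2:ℝ)^k * x i⌋:ℝ) + 1) * (2:ℝ)^(-k)) * (2:ℝ)^k := mul_lt_mul_of_pos_right h2 h2k
        _ = (⌊(2:ℝ)^k * x i⌋:ℝ) + 1 := e2 _

lemma dyadic_measurable : MeasurableSet (dyadicCubeZ n k x) := by
  rw [dyadic_eq_preimage]
  exact (MeasurableEquiv.toLp 2 (Fin n → ℝ)).symm.measurable
    (MeasurableSet.univ_pi fun i => measurableSet_Ico)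

lemma dyadic_volume : volume (dyadicCubeZ n k x) = ENNReal.ofReal (((2:ℝ)^(-k))^n) := by
  rw [dyadic_eq_preimage]
  rw [(EuclideanSpace.volume_preserving_symm_measurableEquiv_toLp (Fin n)).measure_preimage
    ((MeasurableSet.univ_pi fun i => measurableSet_Ico).nullMeasurableSet)]
  rw [volume_pi_pi]
  have : ∀ i : Fin n, volume (Set.Ico ((⌊(2:ℝ)^k * x i⌋ : ℝ) * (2:ℝ)^(-k))
        (((⌊(2:ℝ)^k * x i⌋ : ℝ) + 1) * (2:ℝ)^(-k))) = ENNReal.ofReal ((2:ℝ)^(-k)) := by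
    intro i
    rw [Real.volume_Ico]
    congr 1
    ring
  simp only [this, Finset.prod_const, Finset.card_univ, Fintype.card_fin]
  rw [ENNReal.ofReal_pow (by positivity)]

lemma dyadic_subset : dyadicCubeZ n (k+1) x ⊆ dyadicCubeZ n k x := by
  intro y hy i
  have h := hy i
  have e : ∀ t : ℝ, (2:ℝ)^k * t = ((2:ℝ)^(k+1) * t)/2 := by
    intro t
    rw [zpow_add_one₀ (by norm_num : (2:ℝ) ≠ 0)]
    ring
  rw [e (x i), e (y i)]
  rw [aux_floor_half (((2:ℝ)^(k+1) * x i)/2), aux_floor_half (((2:ℝ)^(k+1) * y i)/2)]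
  have e2 : ∀ t : ℝ, 2 * (t/2) = t := fun t => by ring
  rw [e2, e2, h]

lemma dyadic_dist {u v : EuclideanSpace ℝ (Fin n)}
    (hu : u ∈ dyadicCubeZ n k x) (hv : v ∈ dyadicCubeZ n k x) :
    ‖u - v‖ ≤ (n:ℝ) * (2:ℝ)^(-k) := by
  have h2k : (0:ℝ) < (2:ℝ)^k := by positivity
  have hcoord : ∀ i, |u i - v i| ≤ (2:ℝ)^(-k) := by
    intro i
    have h : ⌊(2:ℝ)^k * u i⌋ = ⌊(2:ℝ)^k * v i⌋ := (hu i).symm.trans (hv i)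
    have h5 := Int.abs_sub_lt_one_of_floor_eq_floor h
    have e : (2:ℝ)^k * u i - (2:ℝ)^k * v i = (2:ℝ)^k * (u i - v i) := by ring
    rw [e, abs_mul, abs_of_pos h2k] at h5
    have hb : (0:ℝ) < (2:ℝ)^(-k) := by positivity
    have hinv : (2:ℝ)^k * (2:ℝ)^(-k) = 1 := by
      rw [← zpow_add₀ (by norm_num : (2:ℝ) ≠ 0)]
      simp
    have e : ((2:ℝ)^k * |u i - v i|) * (2:ℝ)^(-k) = |u i - v i| := by
      rw [mul_comm ((2:ℝ)^k), mul_assoc, hinv, mul_one]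
    calc |u i - v i| = ((2:ℝ)^k * |u i - v i|) * (2:ℝ)^(-k) := e.symm
      _ ≤ 1 * (2:ℝ)^(-k) := mul_le_mul_of_nonneg_right h5.le hb.le
      _ = (2:ℝ)^(-k) := one_mul _
  have hnorm : ‖u - v‖ = Real.sqrt (∑ i, ‖u i - v i‖^2) := by
    rw [EuclideanSpace.norm_eq]
    simp [PiLp.sub_apply]
  rw [hnorm]
  have h1 : (n:ℝ) ≤ (n:ℝ)^2 := by
    have h := Nat.le_self_pow (two_ne_zero) n
    exact_mod_cast h
  have h2 : (0:ℝ) ≤ ((2:ℝ)^(-k))^2 := by positivity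
  have hsum : (∑ i, ‖u i - v i‖^2) ≤ ((n:ℝ) * (2:ℝ)^(-k))^2 := by
    calc (∑ i, ‖u i - v i‖^2) ≤ ∑ _i : Fin n, ((2:ℝ)^(-k))^2 := by
          apply Finset.sum_le_sum
          intro i _
          rw [Real.norm_eq_abs]
          have h3 := hcoord i
          nlinarith [abs_nonneg (u i - v i)]
      _ = (n:ℝ) * ((2:ℝ)^(-k))^2 := by
          rw [Finset.sum_const, Finset.card_univ, Fintype.card_fin, nsmul_eq_mul]
      _ ≤ ((n:ℝ) * (2:ℝ)^(-k))^2 := by nlinarith [mul_le_mul_of_nonneg_right h1 h2]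
  calc Real.sqrt (∑ i, ‖u i - v i‖^2) ≤ Real.sqrt (((n:ℝ) * (2:ℝ)^(-k))^2) :=
        Real.sqrt_le_sqrt hsum
    _ = (n:ℝ) * (2:ℝ)^(-k) := Real.sqrt_sq (by positivity)



/-- When the kernel scale is much coarser than the dyadic cube scale
(`j ≤ k − 10`), the decay `|Φ(x,y)| ≤ A(1+|x−y|)^{−N}` (`N > n`) and the Lipschitz bound
`|Φ(x,y) − Φ(x′,y)| ≤ A|x−x′|(1+|x−y|)^{−N}` for `|x−x′| ≤ 1` give the martingale-difference
bound `|E_{k+1}(T_j f)(x) − E_k(T_j f)(x)| ≤ C A 2^{j−k} M f(x)` for locally integrable `f`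
and any `x` with `M f(x) < ∞`, where `T_j f(x) = ∫ 2^{jn} Φ(2^j x, 2^j y) f(y) dy` and `C`
depends only on `n` and `N`. -/
theorem stmt9 (n : ℕ) (hn : 1 ≤ n) (N : ℝ) (hN : (n : ℝ) < N) :
    ∃ C : ℝ, 0 < C ∧
      ∀ A : ℝ, 0 < A →
        ∀ Φ : EuclideanSpace ℝ (Fin n) × EuclideanSpace ℝ (Fin n) → ℂ,
          Measurable Φ →
          (∀ x y, ‖Φ (x, y)‖ ≤ A * (1 + ‖x - y‖) ^ (-N)) →
          (∀ x x' y, ‖x - x'‖ ≤ 1 →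
            ‖Φ (x, y) - Φ (x', y)‖ ≤ A * ‖x - x'‖ * (1 + ‖x - y‖) ^ (-N)) →
          ∀ f : EuclideanSpace ℝ (Fin n) → ℂ, LocallyIntegrable f volume →
            ∀ j k : ℤ, j ≤ k - 10 →
              ∀ x, maximalFn n (fun y => ‖f y‖) x < ⊤ →
                ENNReal.ofReal
                    ‖dyadicEC n (k + 1)
                        (fun x' => ∫ y,
                          (2 : ℂ) ^ (j * (n : ℤ)) *
                            Φ ((2 : ℝ) ^ j • x', (2 : ℝ) ^ j • y) * f y) x -
                      dyadicEC n k
                        (fun x' => ∫ y,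
                          (2 : ℂ) ^ (j * (n : ℤ)) *
                            Φ ((2 : ℝ) ^ j • x', (2 : ℝ) ^ j • y) * f y) x‖ ≤
                  ENNReal.ofReal (C * A * (2 : ℝ) ^ (j - k)) *
                    maximalFn n (fun y => ‖f y‖) x := by
  classical
  have hN0 : 0 ≤ N := le_trans (Nat.cast_nonneg n) hN.le
  haveI : Nonempty (Fin n) := ⟨⟨0, hn⟩⟩
  haveI hnt : Nontrivial (EuclideanSpace ℝ (Fin n)) := by
    infer_instance
  set V := volume (Metric.ball (0 : EuclideanSpace ℝ (Fin n)) 1) with hVdef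
  have hV0 : V ≠ 0 := (Metric.measure_ball_pos volume _ one_pos).ne'
  have hVT : V ≠ ⊤ := measure_ball_lt_top.ne
  set C0r : ℝ := (2:ℝ)^N / (1 - (2:ℝ)^((n:ℝ) - N)) with hC0r
  have hC0pos : 0 < C0r := by
    apply div_pos (Real.rpow_pos_of_pos two_pos N)
    have h := Real.rpow_lt_one_of_one_lt_of_neg (by norm_num : (1:ℝ) < 2)
      (by linarith : (n:ℝ) - N < 0)
    linarith
  have hn0 : (0:ℝ) < n := by exact_mod_cast hn
  have hVtR : 0 < V.toReal := ENNReal.toReal_pos hV0 hVT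
  refine ⟨(1+(n:ℝ))^N * (1+(n:ℝ))^N * (n:ℝ) * C0r * V.toReal, by positivity, ?_⟩
  intro A hA Φ hΦm hdec hlip f hf j k hjk x hMx
  set c : ℝ := (2:ℝ)^j with hcdef
  have hc : 0 < c := by positivity
  set M := maximalFn n (fun y => ‖f y‖) x with hMdef
  have hMT : M ≠ ⊤ := hMx.ne
  set G : EuclideanSpace ℝ (Fin n) → EuclideanSpace ℝ (Fin n) → ℂ :=
    fun u y => (2 : ℂ) ^ (j * (n : ℤ)) * Φ (c • u, c • y) * f y with hGdef
  set T : EuclideanSpace ℝ (Fin n) → ℂ := fun u => ∫ y, G u y with hTdef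
  -- basic numeric facts
  have hnormpow : ‖(2 : ℂ) ^ (j * (n : ℤ))‖ = c ^ n := by
    rw [norm_zpow]
    have h2 : ‖(2:ℂ)‖ = 2 := by
      simp
    rw [h2, hcdef, zpow_mul, zpow_natCast]
  have hsmulnorm : ∀ u v : EuclideanSpace ℝ (Fin n), ‖c • u - c • v‖ = c * ‖u - v‖ := by
    intro u v
    rw [← smul_sub, norm_smul, Real.norm_eq_abs, abs_of_pos hc]
  have hz : c * (2:ℝ)^(-k) = (2:ℝ)^(j-k) := by
    rw [hcdef, ← zpow_add₀ (by norm_num : (2:ℝ) ≠ 0), sub_eq_add_neg]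
  have h2jk : (2:ℝ)^(j-k) ≤ 1 := by
    calc (2:ℝ)^(j-k) ≤ (2:ℝ)^(0:ℤ) :=
          zpow_le_zpow_right₀ (by norm_num) (by omega)
      _ = 1 := zpow_zero 2
  have h2jk0 : (0:ℝ) < (2:ℝ)^(j-k) := by positivity
  -- distances inside the cube
  have hQd : ∀ u ∈ dyadicCubeZ n k x, ∀ v ∈ dyadicCubeZ n k x,
      ‖c • u - c • v‖ ≤ (n:ℝ) * (2:ℝ)^(j-k) := by
    intro u hu v hv
    rw [hsmulnorm]
    calc c * ‖u - v‖ ≤ c * ((n:ℝ) * (2:ℝ)^(-k)) :=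
          mul_le_mul_of_nonneg_left (dyadic_dist hu hv) hc.le
      _ = (n:ℝ) * (c * (2:ℝ)^(-k)) := by ring
      _ = (n:ℝ) * (2:ℝ)^(j-k) := by rw [hz]
  have hQdn : ∀ u ∈ dyadicCubeZ n k x, ∀ v ∈ dyadicCubeZ n k x,
      ‖c • u - c • v‖ ≤ (n:ℝ) := by
    intro u hu v hv
    calc ‖c • u - c • v‖ ≤ (n:ℝ) * (2:ℝ)^(j-k) := hQd u hu v hv
      _ ≤ (n:ℝ) * 1 := mul_le_mul_of_nonneg_left h2jk hn0.le
      _ = (n:ℝ) := mul_one _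
  -- pointwise decay bound
  have bnd1 : ∀ u ∈ dyadicCubeZ n k x, ∀ y,
      ‖G u y‖ ≤ (A * (1+(n:ℝ))^N) * (c^n * (1 + c * ‖x - y‖)^(-N) * ‖f y‖) := by
    intro u hu y
    have h1 : ‖G u y‖ = c^n * ‖Φ (c • u, c • y)‖ * ‖f y‖ := by
      rw [hGdef]
      simp only [norm_mul, hnormpow]
    have h3 : (1 + ‖c • u - c • y‖)^(-N) ≤
        (1+(n:ℝ))^N * (1 + ‖c • x - c • y‖)^(-N) :=
      aux_kernel_shift hn0.le hN0 (c • u) (c • x) (c • y)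
        (hQdn u hu x dyadic_mem_self)
    rw [hsmulnorm x y] at h3
    have h5 : ‖Φ (c • u, c • y)‖ ≤ A * ((1+(n:ℝ))^N * (1 + c * ‖x - y‖)^(-N)) := by
      calc ‖Φ (c • u, c • y)‖ ≤ A * (1 + ‖c • u - c • y‖)^(-N) := hdec _ _
        _ ≤ A * ((1+(n:ℝ))^N * (1 + c * ‖x - y‖)^(-N)) :=
            mul_le_mul_of_nonneg_left h3 hA.le
    rw [h1]
    calc c^n * ‖Φ (c • u, c • y)‖ * ‖f y‖
        ≤ c^n * (A * ((1+(n:ℝ))^N * (1 + c * ‖x - y‖)^(-N))) * ‖f y‖ :=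
          mul_le_mul_of_nonneg_right
            (mul_le_mul_of_nonneg_left h5 (by positivity)) (norm_nonneg _)
      _ = (A * (1+(n:ℝ))^N) * (c^n * (1 + c * ‖x - y‖)^(-N) * ‖f y‖) := by ring
  -- the key lintegral bound from the maximal function
  have hkey := aux_maximal_bound hn hN f x hc
  rw [← hC0r, ← hVdef, ← hMdef] at hkey
  -- lintegral bound for G u
  have hlintG : ∀ u ∈ dyadicCubeZ n k x,
      (∫⁻ y, (‖G u y‖₊ : ℝ≥0∞)) ≤
        ENNReal.ofReal (A * (1+(n:ℝ))^N) * (ENNReal.ofReal C0r * V * M) := by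
    intro u hu
    calc (∫⁻ y, (‖G u y‖₊ : ℝ≥0∞))
        ≤ ∫⁻ y, ENNReal.ofReal (A * (1+(n:ℝ))^N) *
            (ENNReal.ofReal (c^n * (1 + c * ‖x - y‖)^(-N)) * (‖f y‖₊ : ℝ≥0∞)) := by
          apply lintegral_mono
          intro y
          dsimp only
          rw [← ofReal_norm_eq_coe_nnnorm, ← ofReal_norm_eq_coe_nnnorm,
            ← ENNReal.ofReal_mul (by positivity), ← ENNReal.ofReal_mul (by positivity)]
          exact ENNReal.ofReal_le_ofReal (bnd1 u hu y)
      _ = ENNReal.ofReal (A * (1+(n:ℝ))^N) *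
            ∫⁻ y, ENNReal.ofReal (c^n * (1 + c * ‖x - y‖)^(-N)) * (‖f y‖₊ : ℝ≥0∞) :=
          lintegral_const_mul' _ _ ofReal_ne_top
      _ ≤ ENNReal.ofReal (A * (1+(n:ℝ))^N) * (ENNReal.ofReal C0r * V * M) :=
          mul_le_mul_right hkey _
  -- integrability of G u
  have hGaesm : ∀ u : EuclideanSpace ℝ (Fin n), AEStronglyMeasurable (G u) volume := by
    intro u
    apply AEStronglyMeasurable.mul
    · exact (measurable_const.mul
        (hΦm.comp ((measurable_const.prodMk (measurable_id.const_smul c)).comp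
          measurable_id))).aestronglyMeasurable
    · exact hf.aestronglyMeasurable
  have hInt : ∀ u ∈ dyadicCubeZ n k x, Integrable (G u) volume := by
    intro u hu
    refine ⟨hGaesm u, ?_⟩
    have hfin : (∫⁻ y, (‖G u y‖₊ : ℝ≥0∞)) < ⊤ :=
      lt_of_le_of_lt (hlintG u hu)
        (ENNReal.mul_lt_top ofReal_lt_top
          (ENNReal.mul_lt_top (ENNReal.mul_lt_top ofReal_lt_top hVT.lt_top) hMx))
    exact hfin
  -- Lipschitz estimate in ℝ≥0∞
  set K0 : ℝ := A * (1+(n:ℝ))^N * (1+(n:ℝ))^N * ((n:ℝ) * (2:ℝ)^(j-k)) with hK0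
  set Λ : ℝ≥0∞ := ENNReal.ofReal K0 * (ENNReal.ofReal C0r * V * M) with hΛ
  have hΛT : Λ ≠ ⊤ := by
    rw [hΛ]
    exact (ENNReal.mul_lt_top ofReal_lt_top
      (ENNReal.mul_lt_top (ENNReal.mul_lt_top ofReal_lt_top hVT.lt_top) hMx)).ne
  have hlip2 : ∀ u ∈ dyadicCubeZ n k x, ∀ v ∈ dyadicCubeZ n k x,
      ENNReal.ofReal ‖T u - T v‖ ≤ Λ := by
    intro u hu v hv
    have hTsub : T u - T v = ∫ y, (G u y - G v y) :=
      (integral_sub (hInt u hu) (hInt v hv)).symm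
    have bnd2 : ∀ y, ‖G u y - G v y‖ ≤
        K0 * (c^n * (1 + c * ‖x - y‖)^(-N) * ‖f y‖) := by
      intro y
      have hdiff : G u y - G v y =
          (2 : ℂ) ^ (j * (n : ℤ)) * (Φ (c • u, c • y) - Φ (c • v, c • y)) * f y := by
        rw [hGdef]
        ring
      have hnd : ‖G u y - G v y‖ =
          c^n * ‖Φ (c • u, c • y) - Φ (c • v, c • y)‖ * ‖f y‖ := by
        rw [hdiff]
        simp only [norm_mul, hnormpow]
      have t1 : ‖Φ (c • u, c • y) - Φ (c • v, c • y)‖ ≤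
          A * ‖c • u - c • v‖ * ((1+(n:ℝ))^N * (1 + ‖c • u - c • y‖)^(-N)) :=
        aux_kernel_lip hn hN0 hA.le Φ hlip (c • u) (c • v) (c • y) (hQdn u hu v hv)
      have t2 : (1 + ‖c • u - c • y‖)^(-N) ≤
          (1+(n:ℝ))^N * (1 + c * ‖x - y‖)^(-N) := by
        have h := aux_kernel_shift hn0.le hN0 (c • u) (c • x) (c • y)
          (hQdn u hu x dyadic_mem_self)
        rwa [hsmulnorm x y] at h
      have t3 : ‖c • u - c • v‖ ≤ (n:ℝ) * (2:ℝ)^(j-k) := hQd u hu v hv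
      have t4 : ‖Φ (c • u, c • y) - Φ (c • v, c • y)‖ ≤
          A * ((n:ℝ) * (2:ℝ)^(j-k)) *
            ((1+(n:ℝ))^N * ((1+(n:ℝ))^N * (1 + c * ‖x - y‖)^(-N))) := by
        calc ‖Φ (c • u, c • y) - Φ (c • v, c • y)‖
            ≤ A * ‖c • u - c • v‖ * ((1+(n:ℝ))^N * (1 + ‖c • u - c • y‖)^(-N)) := t1
          _ ≤ A * ‖c • u - c • v‖ *
              ((1+(n:ℝ))^N * ((1+(n:ℝ))^N * (1 + c * ‖x - y‖)^(-N))) := by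
              apply mul_le_mul_of_nonneg_left _ (by positivity)
              exact mul_le_mul_of_nonneg_left t2 (by positivity)
          _ ≤ A * ((n:ℝ) * (2:ℝ)^(j-k)) *
              ((1+(n:ℝ))^N * ((1+(n:ℝ))^N * (1 + c * ‖x - y‖)^(-N))) := by
              apply mul_le_mul_of_nonneg_right _ (by positivity)
              exact mul_le_mul_of_nonneg_left t3 hA.le
      rw [hnd]
      calc c^n * ‖Φ (c • u, c • y) - Φ (c • v, c • y)‖ * ‖f y‖
          ≤ c^n * (A * ((n:ℝ) * (2:ℝ)^(j-k)) *
              ((1+(n:ℝ))^N * ((1+(n:ℝ))^N * (1 + c * ‖x - y‖)^(-N)))) * ‖f y‖ :=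
            mul_le_mul_of_nonneg_right
              (mul_le_mul_of_nonneg_left t4 (by positivity)) (norm_nonneg _)
        _ = K0 * (c^n * (1 + c * ‖x - y‖)^(-N) * ‖f y‖) := by
            rw [hK0]
            ring
    calc ENNReal.ofReal ‖T u - T v‖ = (‖∫ y, (G u y - G v y)‖₊ : ℝ≥0∞) := by
          rw [hTsub, ofReal_norm_eq_coe_nnnorm]
      _ ≤ ∫⁻ y, (‖G u y - G v y‖₊ : ℝ≥0∞) := enorm_integral_le_lintegral_enorm _
      _ ≤ ∫⁻ y, ENNReal.ofReal K0 *
            (ENNReal.ofReal (c^n * (1 + c * ‖x - y‖)^(-N)) * (‖f y‖₊ : ℝ≥0∞)) := by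
          apply lintegral_mono
          intro y
          dsimp only
          rw [← ofReal_norm_eq_coe_nnnorm, ← ofReal_norm_eq_coe_nnnorm,
            ← ENNReal.ofReal_mul (by positivity), ← ENNReal.ofReal_mul (by positivity)]
          exact ENNReal.ofReal_le_ofReal (bnd2 y)
      _ = ENNReal.ofReal K0 *
            ∫⁻ y, ENNReal.ofReal (c^n * (1 + c * ‖x - y‖)^(-N)) * (‖f y‖₊ : ℝ≥0∞) :=
          lintegral_const_mul' _ _ ofReal_ne_top
      _ ≤ Λ := by
          rw [hΛ]
          exact mul_le_mul_right hkey _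
  set L : ℝ := Λ.toReal with hL
  have hgd : ∀ u ∈ dyadicCubeZ n k x, ∀ v ∈ dyadicCubeZ n k x, ‖T u - T v‖ ≤ L := by
    intro u hu v hv
    have h := ENNReal.toReal_mono hΛT (hlip2 u hu v hv)
    rwa [ENNReal.toReal_ofReal (norm_nonneg _)] at h
  -- boundedness of T on the cube, hence integrability
  set Λ' : ℝ≥0∞ := ENNReal.ofReal (A * (1+(n:ℝ))^N) * (ENNReal.ofReal C0r * V * M) with hΛ'
  have hΛ'T : Λ' ≠ ⊤ := by
    rw [hΛ']
    exact (ENNReal.mul_lt_top ofReal_lt_top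
      (ENNReal.mul_lt_top (ENNReal.mul_lt_top ofReal_lt_top hVT.lt_top) hMx)).ne
  have hTbd : ∀ u ∈ dyadicCubeZ n k x, ENNReal.ofReal ‖T u‖ ≤ Λ' := by
    intro u hu
    calc ENNReal.ofReal ‖T u‖ = (‖∫ y, G u y‖₊ : ℝ≥0∞) := by
          rw [hTdef, ofReal_norm_eq_coe_nnnorm]
      _ ≤ ∫⁻ y, (‖G u y‖₊ : ℝ≥0∞) := enorm_integral_le_lintegral_enorm _
      _ ≤ Λ' := hlintG u hu
  have hTae : AEStronglyMeasurable T volume := by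
    have : AEStronglyMeasurable
        (fun p : EuclideanSpace ℝ (Fin n) × EuclideanSpace ℝ (Fin n) =>
          (2 : ℂ) ^ (j * (n : ℤ)) * Φ (c • p.1, c • p.2) * f p.2)
        (volume.prod volume) := by
      apply AEStronglyMeasurable.mul
      · exact (measurable_const.mul (hΦm.comp
          ((measurable_fst.const_smul c).prodMk (measurable_snd.const_smul c)))).aestronglyMeasurable
      · exact hf.aestronglyMeasurable.comp_snd
    exact this.integral_prod_right'
  -- volumes
  have hvol0 : volume (dyadicCubeZ n k x) = ENNReal.ofReal (((2:ℝ)^(-k))^n) :=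
    dyadic_volume
  have hvol1 : volume (dyadicCubeZ n (k+1) x) = ENNReal.ofReal (((2:ℝ)^(-(k+1)))^n) :=
    dyadic_volume
  have hvol0T : volume (dyadicCubeZ n k x) < ⊤ := by
    rw [hvol0]; exact ofReal_lt_top
  have hvol1T : volume (dyadicCubeZ n (k+1) x) < ⊤ := by
    rw [hvol1]; exact ofReal_lt_top
  have htr0 : (volume (dyadicCubeZ n k x)).toReal = ((2:ℝ)^(-k))^n := by
    rw [hvol0, ENNReal.toReal_ofReal (by positivity)]
  have htr1 : (volume (dyadicCubeZ n (k+1) x)).toReal = ((2:ℝ)^(-(k+1)))^n := by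
    rw [hvol1, ENNReal.toReal_ofReal (by positivity)]
  have hsv : ∀ m : ℤ, (2:ℝ)^(m * (n:ℤ)) * ((2:ℝ)^(-m))^n = 1 := by
    intro m
    rw [zpow_mul, zpow_natCast, ← mul_pow, ← zpow_add₀ (by norm_num : (2:ℝ) ≠ 0)]
    simp
  have hs0pos : (0:ℝ) < (2:ℝ)^(k * (n:ℤ)) := by positivity
  have hs1pos : (0:ℝ) < (2:ℝ)^((k+1) * (n:ℤ)) := by positivity
  -- integrability of T on the cubes
  have hIQ0 : IntegrableOn T (dyadicCubeZ n k x) volume := by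
    refine ⟨hTae.restrict, ?_⟩
    have hb : (∫⁻ u in dyadicCubeZ n k x, (‖T u‖₊ : ℝ≥0∞)) ≤
        Λ' * volume (dyadicCubeZ n k x) := by
      calc (∫⁻ u in dyadicCubeZ n k x, (‖T u‖₊ : ℝ≥0∞))
          ≤ ∫⁻ _u in dyadicCubeZ n k x, Λ' := by
            apply lintegral_mono_ae
            filter_upwards [ae_restrict_mem dyadic_measurable] with u hu
            rw [← ofReal_norm_eq_coe_nnnorm]
            exact hTbd u hu
        _ = Λ' * volume (dyadicCubeZ n k x) := setLIntegral_const _ _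
    exact lt_of_le_of_lt hb (ENNReal.mul_lt_top hΛ'T.lt_top hvol0T)
  have hIQ1 : IntegrableOn T (dyadicCubeZ n (k+1) x) volume :=
    hIQ0.mono_set dyadic_subset
  -- first averaging step
  set m0 : ℂ := dyadicEC n k T x with hm0
  have hTm0 : ∀ u ∈ dyadicCubeZ n (k+1) x, ‖T u - m0‖ ≤ L := by
    intro u hu
    have hu0 : u ∈ dyadicCubeZ n k x := dyadic_subset hu
    have e1 : ∫ w in dyadicCubeZ n k x, (T u - T w) =
        (volume (dyadicCubeZ n k x)).toReal • T u - ∫ w in dyadicCubeZ n k x, T w := by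
      rw [integral_sub (integrableOn_const (C := T u) hvol0T.ne) hIQ0, setIntegral_const]; rfl
    have e2 : T u - m0 = ((2:ℝ)^(k * (n:ℤ))) • ∫ w in dyadicCubeZ n k x, (T u - T w) := by
      rw [e1, smul_sub, smul_smul, htr0, hsv k, one_smul, hm0, dyadicEC]
    have e3 : ‖∫ w in dyadicCubeZ n k x, (T u - T w)‖ ≤
        L * (volume (dyadicCubeZ n k x)).toReal :=
      norm_setIntegral_le_of_norm_le_const hvol0T
        (fun w hw => hgd u hu0 w hw)
    rw [e2, norm_smul, Real.norm_eq_abs, abs_of_pos hs0pos]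
    calc (2:ℝ)^(k * (n:ℤ)) * ‖∫ w in dyadicCubeZ n k x, (T u - T w)‖
        ≤ (2:ℝ)^(k * (n:ℤ)) * (L * (volume (dyadicCubeZ n k x)).toReal) :=
          mul_le_mul_of_nonneg_left e3 hs0pos.le
      _ = L * ((2:ℝ)^(k * (n:ℤ)) * ((2:ℝ)^(-k))^n) := by rw [htr0]; ring
      _ = L := by rw [hsv k, mul_one]
  -- second averaging step
  have hfinal : ‖dyadicEC n (k+1) T x - m0‖ ≤ L := by
    have e4 : ∫ u in dyadicCubeZ n (k+1) x, (T u - m0) =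
        (∫ u in dyadicCubeZ n (k+1) x, T u) -
          (volume (dyadicCubeZ n (k+1) x)).toReal • m0 := by
      rw [integral_sub hIQ1 (integrableOn_const hvol1T.ne), setIntegral_const]; rfl
    have e5 : dyadicEC n (k+1) T x - m0 =
        ((2:ℝ)^((k+1) * (n:ℤ))) • ∫ u in dyadicCubeZ n (k+1) x, (T u - m0) := by
      rw [e4, smul_sub, smul_smul, htr1, hsv (k+1), one_smul, dyadicEC]
    have e6 : ‖∫ u in dyadicCubeZ n (k+1) x, (T u - m0)‖ ≤
        L * (volume (dyadicCubeZ n (k+1) x)).toReal :=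
      norm_setIntegral_le_of_norm_le_const hvol1T
        (fun u hu => hTm0 u hu)
    rw [e5, norm_smul, Real.norm_eq_abs, abs_of_pos hs1pos]
    calc (2:ℝ)^((k+1) * (n:ℤ)) * ‖∫ u in dyadicCubeZ n (k+1) x, (T u - m0)‖
        ≤ (2:ℝ)^((k+1) * (n:ℤ)) * (L * (volume (dyadicCubeZ n (k+1) x)).toReal) :=
          mul_le_mul_of_nonneg_left e6 hs1pos.le
      _ = L * ((2:ℝ)^((k+1) * (n:ℤ)) * ((2:ℝ)^(-(k+1)))^n) := by rw [htr1]; ring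
      _ = L := by rw [hsv (k+1), mul_one]
  -- conclusion
  calc ENNReal.ofReal ‖dyadicEC n (k+1) T x - dyadicEC n k T x‖
      ≤ ENNReal.ofReal L := ENNReal.ofReal_le_ofReal (by rw [← hm0]; exact hfinal)
    _ = Λ := by rw [hL, ENNReal.ofReal_toReal hΛT]
    _ = ENNReal.ofReal ((1+(n:ℝ))^N * (1+(n:ℝ))^N * (n:ℝ) * C0r * V.toReal *
          A * (2:ℝ)^(j-k)) * M := by
        rw [hΛ, ← ENNReal.ofReal_toReal hVT,
          ← ENNReal.ofReal_mul (by positivity : (0:ℝ) ≤ C0r), ← mul_assoc,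
          ← ENNReal.ofReal_mul (by rw [hK0]; positivity : (0:ℝ) ≤ K0)]
        have he : K0 * (C0r * V.toReal) =
            (1+(n:ℝ))^N * (1+(n:ℝ))^N * (n:ℝ) * C0r * V.toReal * A * (2:ℝ)^(j-k) := by
          rw [hK0]
          ring
        rw [he, ENNReal.toReal_ofReal hVtR.le]
    _ ≤ ENNReal.ofReal ((1+(n:ℝ))^N * (1+(n:ℝ))^N * (n:ℝ) * C0r * V.toReal *
          A * (2:ℝ)^(j-k)) * M := le_refl _
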